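/- Let g : ℝⁿ → ℝ be differentiable, let h : ℝⁿ → ℝ be strongly convex with modulus σ > 0, let x, y ∈ ℝⁿ, set d := y − x, and assume ∇g(y) ∈ ∂h(x). Then for every s ∈ ∂h(y): ⟨∇g(y) − s, d⟩ ≤ −σ ‖d‖². (In particular, the one-sided directional derivative of φ = g − h at y in the direction d satisfies φ′(y; d) ≤ −σ ‖d‖², so d is a descent direction of φ at y when d ≠ 0.) -/

import Mathlib

open Set Filter Topology

noncomputable section

/-- The (convex-analysis) subdifferential of `f` at `x`:
the set of `w` with `f z ≥ f x + ⟨w, z - x⟩` for all `z`. -/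
def subdiff {n : ℕ} (f : EuclideanSpace ℝ (Fin n) → ℝ) (x : EuclideanSpace ℝ (Fin n)) :
    Set (EuclideanSpace ℝ (Fin n)) :=
  {w | ∀ z, f x + (inner ℝ w (z - x) : ℝ) ≤ f z}

/-- `f` is strongly convex with modulus `σ`. -/
def StrongConvexWith {n : ℕ} (σ : ℝ) (f : EuclideanSpace ℝ (Fin n) → ℝ) : Prop :=
  ∀ x y : EuclideanSpace ℝ (Fin n), ∀ t : ℝ, 0 < t → t < 1 →
    f (t • x + (1 - t) • y) ≤ t * f x + (1 - t) * f y - σ / 2 * (t * (1 - t) * ‖x - y‖ ^ 2)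

/-- Strong subgradient inequality for a strongly convex function. -/
lemma strong_subgrad {n : ℕ} (σ : ℝ) (hσ : 0 < σ)
    (h : EuclideanSpace ℝ (Fin n) → ℝ) (hhs : StrongConvexWith σ h)
    (x y w : EuclideanSpace ℝ (Fin n)) (hw : w ∈ subdiff h x) :
    h x + (inner ℝ w (y - x) : ℝ) + σ / 2 * ‖y - x‖ ^ 2 ≤ h y := by
  set c : ℝ := σ / 2 * ‖y - x‖ ^ 2 with hc
  have hc0 : 0 ≤ c := by positivity
  refine le_of_forall_pos_le_add ?_
  intro ε hε
  set t : ℝ := min (1/2) (ε / (c + 1)) with htdef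
  have ht0 : 0 < t := lt_min (by norm_num) (by positivity)
  have ht1 : t < 1 := lt_of_le_of_lt (min_le_left _ _) (by norm_num)
  have h1 := hw (t • y + (1 - t) • x)
  have h2 := hhs y x t ht0 ht1
  have heq : t • y + (1 - t) • x - x = t • (y - x) := by
    rw [sub_smul, one_smul, smul_sub]
    abel
  rw [heq, real_inner_smul_right] at h1
  -- From h1, h2: h x + t * inner ℝ w (y-x) ≤ t * h y + (1-t) * h x - σ/2 * (t*(1-t)*‖y-x‖^2)
  have key : (inner ℝ w (y - x) : ℝ) ≤ h y - h x - (1 - t) * c := by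
    have := h1.trans h2
    have h3 : t * (inner ℝ w (y - x) : ℝ) ≤ t * (h y - h x - (1 - t) * c) := by
      rw [hc]; nlinarith [this]
    exact le_of_mul_le_mul_left (by linarith [h3]) ht0
  have htc : t * c ≤ ε := by
    have h4 : t ≤ ε / (c + 1) := min_le_right _ _
    have : t * c ≤ (ε / (c + 1)) * c := by nlinarith
    calc t * c ≤ (ε / (c + 1)) * c := this
      _ ≤ ε := by rw [div_mul_eq_mul_div, div_le_iff₀ (by linarith)]; nlinarith
  nlinarith [key]

theorem stmt15 {n : ℕ} (g h : EuclideanSpace ℝ (Fin n) → ℝ)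
    (g' : EuclideanSpace ℝ (Fin n) → EuclideanSpace ℝ (Fin n))
    (hgrad : ∀ z, HasGradientAt g (g' z) z)
    (σ : ℝ) (hσ : 0 < σ) (hhs : StrongConvexWith σ h)
    (x y : EuclideanSpace ℝ (Fin n)) (hgy : g' y ∈ subdiff h x) :
    ∀ s ∈ subdiff h y, (inner ℝ (g' y - s) (y - x) : ℝ) ≤ -σ * ‖y - x‖ ^ 2 := by
  intro s hs
  have h1 := strong_subgrad σ hσ h hhs x y (g' y) hgy
  have h2 := strong_subgrad σ hσ h hhs y x s hs
  have hnorm : ‖x - y‖ = ‖y - x‖ := norm_sub_rev _ _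
  rw [hnorm] at h2
  have hinner : (inner ℝ s (x - y) : ℝ) = - inner ℝ s (y - x) := by
    rw [← neg_sub, inner_neg_right]
  rw [hinner] at h2
  rw [inner_sub_left]
  linarith
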